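/- Under the convexity and qualification assumptions, assume in addition that F(s,·) and φ(t,·) are differentiable for every s ∈ 𝒯̄ and t ∈ 𝒯. If (m,π,u,γ,P) and (m',π',u',γ',P') are two solutions of the system (MFG), then (u,γ,P) = (u',γ',P'). If moreover ℓ(t,x,·) is strictly convex for every (t,x) ∈ 𝒯×S, then also (m,π) = (m',π'), so (MFG) has a unique solution. -/

import Mathlib

noncomputable section
open Finset Filter Topology Bornology
open scoped Classical Pointwise

/-- Fenchel conjugate of a function on a finite coordinate space. -/
def conjFn {d : Type*} [Fintype d] (g : (d → ℝ) → EReal) (y : d → ℝ) : EReal :=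
  ⨆ x : d → ℝ, (↑(∑ i, x i * y i) : EReal) - g x

/-- Fenchel conjugate, scalar case. -/
def conjR (g : ℝ → EReal) (y : ℝ) : EReal :=
  ⨆ x : ℝ, (↑(x * y) : EReal) - g x

/-- Subdifferential (empty where `g = ⊤`). -/
def subdiffFn {d : Type*} [Fintype d] (g : (d → ℝ) → EReal) (x : d → ℝ) : Set (d → ℝ) :=
  {p | g x ≠ ⊤ ∧ ∀ x', g x + (↑(∑ i, p i * (x' i - x i)) : EReal) ≤ g x'}

def subdiffR (g : ℝ → EReal) (x : ℝ) : Set ℝ :=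
  {p | g x ≠ ⊤ ∧ ∀ x', g x + (↑(p * (x' - x)) : EReal) ≤ g x'}

def EProper {E : Type*} (g : E → EReal) : Prop := (∃ x, g x ≠ ⊤) ∧ ∀ x, g x ≠ ⊥

def EConvexOn {E : Type*} [AddCommMonoid E] [SMul ℝ E] (g : E → EReal) : Prop :=
  ∀ x y : E, ∀ a b : ℝ, 0 ≤ a → 0 ≤ b → a + b = 1 →
    g (a • x + b • y) ≤ (a : EReal) * g x + (b : EReal) * g y

def EStrictConvexOn {E : Type*} [AddCommMonoid E] [SMul ℝ E] (g : E → EReal) : Prop :=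
  ∀ x y : E, x ≠ y → g x ≠ ⊤ → g y ≠ ⊤ → ∀ a b : ℝ, 0 < a → 0 < b → a + b = 1 →
    g (a • x + b • y) < (a : EReal) * g x + (b : EReal) * g y

/-- Perspective function. -/
def persp {d : Type*} [Fintype d] (h : (d → ℝ) → EReal) (θ : ℝ) (x : d → ℝ) : EReal :=
  if 0 < θ then (θ : EReal) * h (θ⁻¹ • x)
  else if θ = 0 ∧ x = 0 then 0 else ⊤

/-- The simplex `Δ(S)`. -/
def simplex (n : ℕ) : Set (Fin n → ℝ) :=
  {ρ | (∀ y, ρ y ∈ Set.Icc (0 : ℝ) 1) ∧ ∑ y, ρ y = 1}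

abbrev Msp (T n : ℕ) := Fin (T + 1) → Fin n → ℝ
abbrev Wsp (T n : ℕ) := Fin T → Fin n → Fin n → ℝ
abbrev Psp (T : ℕ) := Fin T → ℝ
abbrev Csp (T n : ℕ) := Msp T n × Wsp T n × Msp T n × Psp T
abbrev Ksp (T n : ℕ) := Msp T n × Msp T n × Psp T
abbrev LSp (T n : ℕ) := Fin T → Fin n → (Fin n → ℝ) → EReal
abbrev FSp (T n : ℕ) := Fin (T + 1) → (Fin n → ℝ) → EReal
abbrev PhiSp (T : ℕ) := Fin T → ℝ → EReal
abbrev ASp (T n : ℕ) := Fin T → Fin n → Fin n → ℝ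

variable {T n : ℕ}

def opA (α : ASp T n) (w : Wsp T n) (t : Fin T) : ℝ := ∑ x, ∑ y, w t x y * α t x y

def opS (w : Wsp T n) (s : Fin (T + 1)) (x : Fin n) : ℝ :=
  if h : (s : ℕ) = 0 then 0
  else ∑ y, w ⟨(s : ℕ) - 1, by have := s.isLt; omega⟩ y x

def mbar0 (m0 : Fin n → ℝ) (s : Fin (T + 1)) (x : Fin n) : ℝ := if s = 0 then m0 x else 0

def Qcpl (α : ASp T n) (m : Msp T n) (π : Wsp T n) (t : Fin T) : ℝ :=
  ∑ x, ∑ y, m t.castSucc x * π t x y * α t x y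

def IsKol (m0 : Fin n → ℝ) (π : Wsp T n) (m : Msp T n) : Prop :=
  (∀ x, m 0 x = m0 x) ∧
    ∀ (t : Fin T) (x : Fin n), m t.succ x = ∑ y, m t.castSucc y * π t y x

def InDelta (π : Wsp T n) : Prop := ∀ t x, π t x ∈ simplex n

def ConvAssumption (ℓ : LSp T n) (F : FSp T n) (φ : PhiSp T) : Prop :=
  (∀ t x, EProper (ℓ t x) ∧ EConvexOn (ℓ t x) ∧ LowerSemicontinuous (ℓ t x) ∧
    ∀ ρ, ℓ t x ρ ≠ ⊤ → ρ ∈ simplex n) ∧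
  (∀ s, EProper (F s) ∧ EConvexOn (F s) ∧ LowerSemicontinuous (F s)) ∧
  (∀ t, EProper (φ t) ∧ EConvexOn (φ t) ∧ LowerSemicontinuous (φ t))

def Jpot (ℓ : LSp T n) (F : FSp T n) (φ : PhiSp T) (α : ASp T n)
    (m : Msp T n) (π : Wsp T n) : EReal :=
  (∑ t, ∑ x, (↑(m t.castSucc x) : EReal) * ℓ t x (π t x)) +
    (∑ t, φ t (Qcpl α m π t)) + ∑ s, F s (m s)

def Jtil (ℓ : LSp T n) (F : FSp T n) (φ : PhiSp T) (α : ASp T n)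
    (m : Msp T n) (w : Wsp T n) : EReal :=
  (∑ t, ∑ x, persp (ℓ t x) (m t.castSucc x) (w t x)) +
    (∑ t, φ t (opA α w t)) + ∑ s, F s (m s)

def FeasP (m0 : Fin n → ℝ) (p : Msp T n × Wsp T n) : Prop := InDelta p.2 ∧ IsKol m0 p.2 p.1

def FeasPt (m0 : Fin n → ℝ) (p : Msp T n × Wsp T n) : Prop :=
  ∀ s x, opS p.2 s x - p.1 s x + mbar0 m0 s x = 0

def valP (ℓ : LSp T n) (F : FSp T n) (φ : PhiSp T) (α : ASp T n) (m0 : Fin n → ℝ) : EReal :=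
  ⨅ p ∈ {p : Msp T n × Wsp T n | FeasP m0 p}, Jpot ℓ F φ α p.1 p.2

def valPt (ℓ : LSp T n) (F : FSp T n) (φ : PhiSp T) (α : ASp T n) (m0 : Fin n → ℝ) : EReal :=
  ⨅ p ∈ {p : Msp T n × Wsp T n | FeasPt m0 p}, Jtil ℓ F φ α p.1 p.2

def IsSolP (ℓ : LSp T n) (F : FSp T n) (φ : PhiSp T) (α : ASp T n) (m0 : Fin n → ℝ)
    (p : Msp T n × Wsp T n) : Prop :=
  FeasP m0 p ∧ ∀ q, FeasP m0 q → Jpot ℓ F φ α p.1 p.2 ≤ Jpot ℓ F φ α q.1 q.2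

def IsSolPt (ℓ : LSp T n) (F : FSp T n) (φ : PhiSp T) (α : ASp T n) (m0 : Fin n → ℝ)
    (p : Msp T n × Wsp T n) : Prop :=
  FeasPt m0 p ∧ ∀ q, FeasPt m0 q → Jtil ℓ F φ α p.1 p.2 ≤ Jtil ℓ F φ α q.1 q.2

def dpCost (ℓ : LSp T n) (α : ASp T n) (u : Msp T n) (P : Psp T)
    (t : Fin T) (x : Fin n) : EReal :=
  conjFn (ℓ t x) (fun y => -(α t x y * P t + u t.succ y))

def FeasD (ℓ : LSp T n) (α : ASp T n) (k : Ksp T n) : Prop :=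
  (∀ t x, (↑(k.1 t.castSucc x) : EReal) + dpCost ℓ α k.1 k.2.2 t x ≤ ↑(k.2.1 t.castSucc x)) ∧
  ∀ x, k.1 (Fin.last T) x = k.2.1 (Fin.last T) x

def Dobj (F : FSp T n) (φ : PhiSp T) (m0 : Fin n → ℝ) (k : Ksp T n) : EReal :=
  (↑(∑ x, m0 x * k.1 0 x) : EReal) - (∑ t, conjR (φ t) (k.2.2 t)) -
    ∑ s, conjFn (F s) (k.2.1 s)

def valD (ℓ : LSp T n) (F : FSp T n) (φ : PhiSp T) (α : ASp T n) (m0 : Fin n → ℝ) : EReal :=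
  ⨆ k ∈ {k : Ksp T n | FeasD ℓ α k}, Dobj F φ m0 k

def IsSolD (ℓ : LSp T n) (F : FSp T n) (φ : PhiSp T) (α : ASp T n) (m0 : Fin n → ℝ)
    (k : Ksp T n) : Prop :=
  FeasD ℓ α k ∧ ∀ k', FeasD ℓ α k' → Dobj F φ m0 k' ≤ Dobj F φ m0 k

/-- `IsDP ℓ α γ P u` : `u = U[γ,P]`, i.e. `u` solves the dynamic programming equation. -/
def IsDP (ℓ : LSp T n) (α : ASp T n) (γ : Msp T n) (P : Psp T) (u : Msp T n) : Prop :=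
  (∀ (t : Fin T) (x : Fin n),
    (↑(u t.castSucc x) : EReal) + dpCost ℓ α u P t x = ↑(γ t.castSucc x)) ∧
  ∀ x, u (Fin.last T) x = γ (Fin.last T) x

def valDt (ℓ : LSp T n) (F : FSp T n) (φ : PhiSp T) (α : ASp T n) (m0 : Fin n → ℝ) : EReal :=
  ⨆ k ∈ {k : Ksp T n | IsDP ℓ α k.2.1 k.2.2 k.1}, Dobj F φ m0 k

def IsSolDt (ℓ : LSp T n) (F : FSp T n) (φ : PhiSp T) (α : ASp T n) (m0 : Fin n → ℝ)
    (γ : Msp T n) (P : Psp T) (u : Msp T n) : Prop :=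
  IsDP ℓ α γ P u ∧
    ∀ γ' P' u', IsDP ℓ α γ' P' u' → Dobj F φ m0 (u', γ', P') ≤ Dobj F φ m0 (u, γ, P)

def IsKolPert (m0 : Fin n → ℝ) (ε1 : Msp T n) (π : Wsp T n) (m1 : Msp T n) : Prop :=
  (∀ x, m1 0 x = mbar0 m0 (0 : Fin (T + 1)) x + ε1 0 x) ∧
  ∀ (t : Fin T) (x : Fin n), m1 t.succ x = (∑ y, m1 t.castSucc y * π t y x) - ε1 t.succ x

def qnorm (ε1 ε2 : Msp T n) (ε3 : Psp T) : ℝ :=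
  Real.sqrt ((∑ s, ∑ x, ε1 s x ^ 2) + (∑ s, ∑ x, ε2 s x ^ 2) + ∑ t, ε3 t ^ 2)

def Qualif (ℓ : LSp T n) (F : FSp T n) (φ : PhiSp T) (α : ASp T n) (m0 : Fin n → ℝ) : Prop :=
  ∃ α0 : ℝ, 0 < α0 ∧ ∀ (ε1 ε2 : Msp T n) (ε3 : Psp T), qnorm ε1 ε2 ε3 ≤ α0 →
    ∃ π : Wsp T n, (∀ t x, ℓ t x (π t x) ≠ ⊤) ∧
      ∃ m1 : Msp T n, IsKolPert m0 ε1 π m1 ∧ (∀ s x, 0 ≤ m1 s x) ∧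
        (∀ s, F s (fun x => m1 s x + ε2 s x) ≠ ⊤) ∧
        ∀ t, φ t (Qcpl α m1 π t + ε3 t) ≠ ⊤

def Fobj (ℓ : LSp T n) (F : FSp T n) (φ : PhiSp T) (c : Csp T n) : EReal :=
  (∑ t, ∑ x, persp (ℓ t x) (c.1 t.castSucc x) (c.2.1 t x)) +
    (∑ t, φ t (c.2.2.2 t)) + ∑ s, F s (c.2.2.1 s)

def Gobj (m0 : Fin n → ℝ) (k : Ksp T n) : EReal :=
  if (∀ s x, k.1 s x = -(mbar0 m0 s x)) ∧ k.2.1 = 0 ∧ k.2.2 = 0 then 0 else ⊤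

def Aop (α : ASp T n) (c : Csp T n) : Ksp T n :=
  (fun s x => opS c.2.1 s x - c.1 s x,
   fun s x => c.1 s x - c.2.2.1 s x,
   fun t => opA α c.2.1 t - c.2.2.2 t)

def AstarOp (α : ASp T n) (k : Ksp T n) : Csp T n :=
  (fun s x => k.2.1 s x - k.1 s x,
   fun t x y => α t x y * k.2.2 t + k.1 t.succ y,
   fun s x => -k.2.1 s x,
   fun t => -k.2.2 t)

def cpair (c c' : Csp T n) : ℝ :=
  (∑ s, ∑ x, c.1 s x * c'.1 s x) + (∑ t, ∑ x, ∑ y, c.2.1 t x y * c'.2.1 t x y) +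
    (∑ s, ∑ x, c.2.2.1 s x * c'.2.2.1 s x) + ∑ t, c.2.2.2 t * c'.2.2.2 t

def kpair (k k' : Ksp T n) : ℝ :=
  (∑ s, ∑ x, k.1 s x * k'.1 s x) + (∑ s, ∑ x, k.2.1 s x * k'.2.1 s x) +
    ∑ t, k.2.2 t * k'.2.2 t

def FobjStar (ℓ : LSp T n) (F : FSp T n) (φ : PhiSp T) (c' : Csp T n) : EReal :=
  ⨆ c : Csp T n, (↑(cpair c c') : EReal) - Fobj ℓ F φ c

def GobjStar (m0 : Fin n → ℝ) (k : Ksp T n) : EReal := ↑(-(∑ x, m0 x * k.1 0 x))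

def PfrakObj (ℓ : LSp T n) (F : FSp T n) (φ : PhiSp T) (α : ASp T n) (m0 : Fin n → ℝ)
    (c : Csp T n) : EReal := Fobj ℓ F φ c + Gobj m0 (Aop α c)

def DfrakObj (ℓ : LSp T n) (F : FSp T n) (φ : PhiSp T) (α : ASp T n) (m0 : Fin n → ℝ)
    (k : Ksp T n) : EReal := FobjStar ℓ F φ (-AstarOp α k) + GobjStar m0 k

def IsSolPfrak (ℓ : LSp T n) (F : FSp T n) (φ : PhiSp T) (α : ASp T n) (m0 : Fin n → ℝ)
    (c : Csp T n) : Prop := ∀ c', PfrakObj ℓ F φ α m0 c ≤ PfrakObj ℓ F φ α m0 c'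

def IsSolDfrak (ℓ : LSp T n) (F : FSp T n) (φ : PhiSp T) (α : ASp T n) (m0 : Fin n → ℝ)
    (k : Ksp T n) : Prop := ∀ k', DfrakObj ℓ F φ α m0 k ≤ DfrakObj ℓ F φ α m0 k'

def MFGi (ℓ : LSp T n) (α : ASp T n) (γ : Msp T n) (P : Psp T) (u : Msp T n) : Prop :=
  (∀ (t : Fin T) (x : Fin n), (↑(u t.castSucc x) : EReal) =
      ⨅ ρ ∈ simplex n,
        ℓ t x ρ + ↑(γ t.castSucc x) + ↑(∑ y, ρ y * (α t x y * P t + u t.succ y))) ∧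
  ∀ x, u (Fin.last T) x = γ (Fin.last T) x

def MFGii (ℓ : LSp T n) (α : ASp T n) (π : Wsp T n) (γ : Msp T n) (P : Psp T)
    (u : Msp T n) : Prop :=
  ∀ (t : Fin T) (x : Fin n),
    ℓ t x (π t x) + ↑(γ t.castSucc x) + ↑(∑ y, π t x y * (α t x y * P t + u t.succ y)) =
      (↑(u t.castSucc x) : EReal)

def IsMFGSol (ℓ : LSp T n) (F : FSp T n) (φ : PhiSp T) (α : ASp T n) (m0 : Fin n → ℝ)
    (m : Msp T n) (π : Wsp T n) (u : Msp T n) (γ : Msp T n) (P : Psp T) : Prop :=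
  InDelta π ∧ MFGi ℓ α γ P u ∧ MFGii ℓ α π γ P u ∧ IsKol m0 π m ∧
    (∀ s, γ s ∈ subdiffFn (F s) (m s)) ∧ ∀ t, P t ∈ subdiffR (φ t) (Qcpl α m π t)


lemma ecoe_sum {ι : Type*} (s : Finset ι) (f : ι → ℝ) :
    ((∑ i ∈ s, f i : ℝ) : EReal) = ∑ i ∈ s, ((f i : ℝ) : EReal) :=
  map_sum (⟨⟨Real.toEReal, EReal.coe_zero⟩, EReal.coe_add⟩ : ℝ →+ EReal) f s

lemma persp_ne_bot {d : Type*} [Fintype d] (h : (d → ℝ) → EReal)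
    (hbot : ∀ ρ, h ρ ≠ ⊥) (θ : ℝ) (v : d → ℝ) : persp h θ v ≠ ⊥ := by
  unfold persp
  split_ifs with h1 h2
  · rcases eq_or_ne (h (θ⁻¹ • v)) ⊤ with ht | ht
    · rw [ht, EReal.mul_top_of_pos (by exact_mod_cast h1)]; simp
    · rw [← EReal.coe_toReal ht (hbot _), ← EReal.coe_mul]; exact EReal.coe_ne_bot _
  · simp
  · simp

lemma persp_ge {d : Type*} [Fintype d] (h : (d → ℝ) → EReal)
    (b : ℝ) (a : d → ℝ) (hlb : ∀ ρ, (↑(b - ∑ y, ρ y * a y) : EReal) ≤ h ρ)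
    (θ : ℝ) (v : d → ℝ) :
    (↑(θ * b - ∑ y, v y * a y) : EReal) ≤ persp h θ v := by
  unfold persp
  split_ifs with h1 h2
  · have h2 := hlb (θ⁻¹ • v)
    have h3 : (θ : EReal) * ↑(b - ∑ y, (θ⁻¹ • v) y * a y) ≤ (θ : EReal) * h (θ⁻¹ • v) :=
      mul_le_mul_of_nonneg_left h2 (by exact_mod_cast h1.le)
    refine le_trans (le_of_eq ?_) h3
    rw [← EReal.coe_mul]
    norm_cast
    simp only [Pi.smul_apply, smul_eq_mul, Finset.mul_sum, mul_sub]
    congr 1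
    refine Finset.sum_congr rfl fun y _ => ?_
    field_simp
  · obtain ⟨rfl, rfl⟩ := h2
    simp
  · exact le_top

lemma persp_eq {d : Type*} [Fintype d] (h : (d → ℝ) → EReal)
    {L θ : ℝ} {ρ : d → ℝ} (hL : h ρ = ↑L) (hθ : 0 ≤ θ) :
    persp h θ (θ • ρ) = ↑(θ * L) := by
  unfold persp
  rcases lt_or_eq_of_le hθ with h1 | h1
  · rw [if_pos h1, smul_smul, inv_mul_cancel₀ h1.ne', one_smul, hL, ← EReal.coe_mul]
  · rw [if_neg (by rw [← h1]; exact lt_irrefl 0), if_pos ⟨h1.symm, by rw [← h1, zero_smul]⟩,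
      ← h1, zero_mul, EReal.coe_zero]

lemma persp_mid {d : Type*} [Fintype d] (h : (d → ℝ) → EReal) (hcv : EConvexOn h)
    {θ1 θ2 L1 L2 : ℝ} {ρ1 ρ2 : d → ℝ} (h1 : 0 ≤ θ1) (h2 : 0 ≤ θ2)
    (hL1 : h ρ1 = ↑L1) (hL2 : h ρ2 = ↑L2) :
    persp h ((θ1 + θ2) / 2) ((2:ℝ)⁻¹ • (θ1 • ρ1 + θ2 • ρ2)) ≤ ↑((θ1 * L1 + θ2 * L2) / 2) := by
  rcases eq_or_lt_of_le (add_nonneg h1 h2) with hz | hz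
  · have hθ1 : θ1 = 0 := by linarith [h1, h2, hz.symm]
    have hθ2 : θ2 = 0 := by linarith [h1, h2, hz.symm]
    subst hθ1; subst hθ2
    simp only [zero_smul, add_zero, smul_zero, zero_mul, zero_div, EReal.coe_zero]
    unfold persp
    rw [if_neg (by norm_num), if_pos ⟨by norm_num, rfl⟩]
  · have hc : (0:ℝ) < (θ1 + θ2) / 2 := by linarith
    set c : ℝ := (θ1 + θ2) / 2 with hcdef
    have key : c⁻¹ • ((2:ℝ)⁻¹ • (θ1 • ρ1 + θ2 • ρ2)) =
        (θ1 / (θ1 + θ2)) • ρ1 + (θ2 / (θ1 + θ2)) • ρ2 := by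
      have hne : θ1 + θ2 ≠ 0 := hz.ne'
      have e1 : c⁻¹ * (2⁻¹ * θ1) = θ1 / (θ1 + θ2) := by
        rw [hcdef]; field_simp
      have e2 : c⁻¹ * (2⁻¹ * θ2) = θ2 / (θ1 + θ2) := by
        rw [hcdef]; field_simp
      rw [smul_smul, smul_add, smul_smul, smul_smul, mul_assoc, mul_assoc, e1, e2]
    have hcv2 := hcv ρ1 ρ2 (θ1 / (θ1 + θ2)) (θ2 / (θ1 + θ2))
      (div_nonneg h1 (by linarith)) (div_nonneg h2 (by linarith))
      (by field_simp)
    rw [hL1, hL2, ← EReal.coe_mul, ← EReal.coe_mul, ← EReal.coe_add] at hcv2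
    unfold persp
    rw [if_pos hc, key]
    calc (c : EReal) * h ((θ1 / (θ1 + θ2)) • ρ1 + (θ2 / (θ1 + θ2)) • ρ2)
        ≤ (c : EReal) * ↑(θ1 / (θ1 + θ2) * L1 + θ2 / (θ1 + θ2) * L2) :=
          mul_le_mul_of_nonneg_left hcv2 (by exact_mod_cast hc.le)
      _ = ↑((θ1 * L1 + θ2 * L2) / 2) := by
          rw [← EReal.coe_mul]; norm_cast; field_simp [hcdef]; ring

lemma telescope {T : ℕ} (g : Fin (T+1) → ℝ) :
    ∑ t : Fin T, (g t.castSucc - g t.succ) = g 0 - g (Fin.last T) := by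
  rw [Finset.sum_sub_distrib]
  have h1 : ∑ t : Fin T, g t.castSucc = (∑ s, g s) - g (Fin.last T) := by
    rw [Fin.sum_univ_castSucc]; ring
  have h2 : ∑ t : Fin T, g t.succ = (∑ s, g s) - g 0 := by
    rw [Fin.sum_univ_succ]; ring
  rw [h1, h2]; ring

lemma key_alg {T n : ℕ} (u γ : Msp T n) (P : Psp T) (α : ASp T n) (m0 : Fin n → ℝ)
    (hlast : ∀ x, u (Fin.last T) x = γ (Fin.last T) x)
    (mh : Msp T n) (wh : Wsp T n) (h0 : ∀ x, mh 0 x = m0 x)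
    (hk : ∀ (t : Fin T) (x : Fin n), mh t.succ x = ∑ y, wh t y x) :
    (∑ t, ∑ x, (mh t.castSucc x * (u t.castSucc x - γ t.castSucc x)
       - ∑ y, wh t x y * (α t x y * P t + u t.succ y)))
      + (∑ t, P t * opA α wh t)
      + (∑ s, ∑ x, γ s x * mh s x)
      = ∑ x, m0 x * u 0 x := by
  have step1 : ∀ t : Fin T, ∑ x, ∑ y, wh t x y * (α t x y * P t + u t.succ y)
      = P t * opA α wh t + ∑ y, mh t.succ y * u t.succ y := by
    intro t
    have e1 : ∑ x, ∑ y, wh t x y * (α t x y * P t + u t.succ y)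
        = (∑ x, ∑ y, wh t x y * α t x y * P t) + ∑ x, ∑ y, wh t x y * u t.succ y := by
      rw [← Finset.sum_add_distrib]
      refine Finset.sum_congr rfl fun x _ => ?_
      rw [← Finset.sum_add_distrib]
      exact Finset.sum_congr rfl fun y _ => by ring
    rw [e1]
    congr 1
    · rw [opA, Finset.mul_sum]
      refine Finset.sum_congr rfl fun x _ => ?_
      rw [Finset.mul_sum]
      exact Finset.sum_congr rfl fun y _ => by ring
    · rw [Finset.sum_comm]
      refine Finset.sum_congr rfl fun y _ => ?_
      rw [hk t y, Finset.sum_mul]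
  have hpt : ∀ t : Fin T, ∑ x, (mh t.castSucc x * (u t.castSucc x - γ t.castSucc x)
       - ∑ y, wh t x y * (α t x y * P t + u t.succ y))
      = (∑ x, mh t.castSucc x * u t.castSucc x) - (∑ x, γ t.castSucc x * mh t.castSucc x)
        - P t * opA α wh t - ∑ x, mh t.succ x * u t.succ x := by
    intro t
    rw [Finset.sum_sub_distrib, step1 t]
    have e2 : ∑ x, mh t.castSucc x * (u t.castSucc x - γ t.castSucc x)
        = (∑ x, mh t.castSucc x * u t.castSucc x) - ∑ x, γ t.castSucc x * mh t.castSucc x := by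
      rw [← Finset.sum_sub_distrib]; exact Finset.sum_congr rfl fun x _ => by ring
    rw [e2]; ring
  rw [Finset.sum_congr rfl fun t _ => hpt t]
  have e3 : ∑ t : Fin T, ((∑ x, mh t.castSucc x * u t.castSucc x)
        - (∑ x, γ t.castSucc x * mh t.castSucc x)
        - P t * opA α wh t - ∑ x, mh t.succ x * u t.succ x)
      = (∑ t : Fin T, ((fun s => ∑ x, mh s x * u s x) t.castSucc
            - (fun s => ∑ x, mh s x * u s x) t.succ))
        - (∑ t : Fin T, (fun s => ∑ x, γ s x * mh s x) t.castSucc)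
        - ∑ t : Fin T, P t * opA α wh t := by
    rw [Finset.sum_sub_distrib, Finset.sum_sub_distrib, Finset.sum_sub_distrib,
      Finset.sum_sub_distrib]
    ring
  rw [e3, telescope (fun s => ∑ x, mh s x * u s x)]
  have e4 : ∑ s, ∑ x, γ s x * mh s x
      = (∑ t : Fin T, (fun s => ∑ x, γ s x * mh s x) t.castSucc)
        + ∑ x, γ (Fin.last T) x * mh (Fin.last T) x :=
    Fin.sum_univ_castSucc (f := fun s => ∑ x, γ s x * mh s x)
  rw [e4]
  have e5 : ∑ x, mh (Fin.last T) x * u (Fin.last T) x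
      = ∑ x, γ (Fin.last T) x * mh (Fin.last T) x :=
    Finset.sum_congr rfl fun x _ => by rw [hlast x]; ring
  have e6 : ∑ x, mh 0 x * u 0 x = ∑ x, m0 x * u 0 x :=
    Finset.sum_congr rfl fun x _ => by rw [h0 x]
  rw [e5] at *
  linarith [e6]

section ConvAnalysis
variable {E : Type*} [NormedAddCommGroup E] [NormedSpace ℝ E]

lemma line_hasDerivAt (a d : E) (t0 : ℝ) :
    HasDerivAt (fun t : ℝ => a + t • d) d t0 := by
  simpa using ((hasDerivAt_id t0).smul_const d).const_add a

lemma comp_line_hasDerivAt (g : E → ℝ) {a : E} (hd : DifferentiableAt ℝ g a) (d : E) :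
    HasDerivAt (fun t : ℝ => g (a + t • d)) (fderiv ℝ g a d) 0 := by
  have hline := line_hasDerivAt a d 0
  have hg : HasFDerivAt g (fderiv ℝ g a) (a + (0:ℝ) • d) := by simpa using hd.hasFDerivAt
  exact hg.comp_hasDerivAt 0 hline

/-- For differentiable g, the directional derivative is the limit of forward slopes;
any linear lower bound on slopes gives a bound on the directional derivative. -/
lemma dirDeriv_ge (g : E → ℝ) {a : E} (hd : DifferentiableAt ℝ g a) (d : E) (c : ℝ)
    (hc : ∀ t : ℝ, 0 < t → t ≤ 1 → c ≤ (g (a + t • d) - g a) / t) :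
    c ≤ fderiv ℝ g a d := by
  have h1 := (hasDerivAt_iff_tendsto_slope.1 (comp_line_hasDerivAt g hd d))
  have h2 : Tendsto (slope (fun t : ℝ => g (a + t • d)) 0) (𝓝[>] 0)
      (𝓝 (fderiv ℝ g a d)) := h1.mono_left (nhdsWithin_mono 0 (fun t ht => ne_of_gt ht))
  refine ge_of_tendsto h2 ?_
  filter_upwards [Ioc_mem_nhdsGT_of_mem (Set.left_mem_Ico.2 zero_lt_one)] with t ht
  have := hc t ht.1 ht.2
  rw [slope_def_field]
  simpa [div_eq_mul_inv] using this

lemma dirDeriv_le (g : E → ℝ) {a : E} (hd : DifferentiableAt ℝ g a) (d : E) (c : ℝ)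
    (hc : ∀ t : ℝ, 0 < t → t ≤ 1 → (g (a + t • d) - g a) / t ≤ c) :
    fderiv ℝ g a d ≤ c := by
  have h1 := (hasDerivAt_iff_tendsto_slope.1 (comp_line_hasDerivAt g hd d))
  have h2 : Tendsto (slope (fun t : ℝ => g (a + t • d)) 0) (𝓝[>] 0)
      (𝓝 (fderiv ℝ g a d)) := h1.mono_left (nhdsWithin_mono 0 (fun t ht => ne_of_gt ht))
  refine le_of_tendsto h2 ?_
  filter_upwards [Ioc_mem_nhdsGT_of_mem (Set.left_mem_Ico.2 zero_lt_one)] with t ht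
  have := hc t ht.1 ht.2
  rw [slope_def_field]
  simpa [div_eq_mul_inv] using this

/-- Convexity: the gradient is a subgradient. -/
lemma conv_grad_le (g : E → ℝ) (hg : ConvexOn ℝ Set.univ g) {c : E}
    (hd : DifferentiableAt ℝ g c) (x : E) :
    g c + fderiv ℝ g c (x - c) ≤ g x := by
  have h1 : fderiv ℝ g c (x - c) ≤ g x - g c := by
    refine dirDeriv_le g hd (x - c) _ fun t ht ht1 => ?_
    have h2 : c + t • (x - c) = (1 - t) • c + t • x := by
      rw [smul_sub]; module
    have h3 := hg.2 (Set.mem_univ c) (Set.mem_univ x) (by linarith : (0:ℝ) ≤ 1 - t) ht.le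
      (by ring)
    rw [h2]
    rw [div_le_iff₀ ht]
    have h3' : g ((1-t) • c + t • x) ≤ (1-t) * g c + t * g x := by
      simpa [smul_eq_mul] using h3
    calc g ((1-t) • c + t • x) - g c ≤ (1-t) * g c + t * g x - g c := by linarith
      _ = (g x - g c) * t := by ring
  linarith

/-- A subgradient at a differentiability point agrees with the derivative. -/
lemma subgrad_eq_fderiv (g : E → ℝ) {a : E} (hd : DifferentiableAt ℝ g a)
    (ψ : E →ₗ[ℝ] ℝ) (hq : ∀ x', g a + ψ (x' - a) ≤ g x') (d : E) :
    ψ d = fderiv ℝ g a d := by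
  have h1 : ψ d ≤ fderiv ℝ g a d := by
    refine dirDeriv_ge g hd d _ fun t ht _ => ?_
    rw [le_div_iff₀ ht]
    have := hq (a + t • d)
    have h2 : ψ (a + t • d - a) = t * ψ d := by
      rw [show a + t • d - a = t • d by abel, map_smul]; simp [mul_comm]
    rw [h2] at this; linarith
  have h2 : ψ (-d) ≤ fderiv ℝ g a (-d) := by
    refine dirDeriv_ge g hd (-d) _ fun t ht _ => ?_
    rw [le_div_iff₀ ht]
    have := hq (a + t • (-d))
    have h3 : ψ (a + t • (-d) - a) = t * ψ (-d) := by
      rw [show a + t • (-d) - a = t • (-d) by abel, map_smul]; simp [mul_comm]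
    rw [h3] at this; linarith
  rw [map_neg] at h2
  rw [(fderiv ℝ g a).map_neg] at h2
  linarith

/-- Transfer of subgradient from the midpoint to an endpoint. -/
lemma mid_subgrad (g : E → ℝ) (ψ : E →ₗ[ℝ] ℝ) (a b c : E) (hc : a + b = c + c)
    (hmid : g a + g b = g c + g c) (hsub : ∀ x', g c + ψ (x' - c) ≤ g x') :
    ∀ x', g a + ψ (x' - a) ≤ g x' := by
  have h1 := hsub a
  have h2 := hsub b
  have h3 : ψ (a - c) + ψ (b - c) = 0 := by
    rw [← map_add, show a - c + (b - c) = a + b - (c + c) by abel, hc]; simp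
  have h4 : g a = g c + ψ (a - c) := by linarith
  intro x'
  have h5 : ψ (x' - a) = ψ (x' - c) - ψ (a - c) := by
    rw [← map_sub, show x' - c - (a - c) = x' - a by abel]
  rw [h4, h5]
  linarith [hsub x']

def pairLin {d : Type*} [Fintype d] (p : d → ℝ) : (d → ℝ) →ₗ[ℝ] ℝ where
  toFun z := ∑ i, p i * z i
  map_add' x y := by simp [mul_add, Finset.sum_add_distrib]
  map_smul' r x := by
    simp only [Pi.smul_apply, smul_eq_mul, RingHom.id_apply, Finset.mul_sum]
    exact Finset.sum_congr rfl fun i _ => by ring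

lemma pairLin_apply {d : Type*} [Fintype d] (p z : d → ℝ) :
    pairLin p z = ∑ i, p i * z i := rfl

lemma pairLin_single {d : Type*} [Fintype d] [DecidableEq d] (p : d → ℝ) (i : d) :
    pairLin p (Pi.single i 1) = p i := by
  rw [pairLin_apply]
  rw [Finset.sum_eq_single i (fun j _ hj => by simp [Pi.single_apply, hj.symm]) (by simp)]
  simp

lemma subgrad_unique_of_mid {d : Type*} [Fintype d] (g : (d → ℝ) → ℝ)
    (hg : ConvexOn ℝ Set.univ g) (hd : Differentiable ℝ g)
    (a b q1 q2 : d → ℝ)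
    (hmid : g a + g b = g ((2:ℝ)⁻¹ • (a + b)) + g ((2:ℝ)⁻¹ • (a + b)))
    (hq1 : ∀ x', g a + ∑ i, q1 i * (x' i - a i) ≤ g x')
    (hq2 : ∀ x', g b + ∑ i, q2 i * (x' i - b i) ≤ g x') : q1 = q2 := by
  classical
  set c : d → ℝ := (2:ℝ)⁻¹ • (a + b) with hcdef
  have hc : a + b = c + c := by rw [hcdef]; module
  have hc' : b + a = c + c := by rw [add_comm]; exact hc
  set ψc : (d → ℝ) →ₗ[ℝ] ℝ := (fderiv ℝ g c).toLinearMap with hψc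
  have hsubc : ∀ x', g c + ψc (x' - c) ≤ g x' := fun x' => conv_grad_le g hg (hd c) x'
  have hsa := mid_subgrad g ψc a b c hc hmid hsubc
  have hsb := mid_subgrad g ψc b a c hc' (by linarith) hsubc
  funext i
  have e1 : q1 i = fderiv ℝ g a (Pi.single i 1) := by
    rw [← pairLin_single q1 i]
    exact subgrad_eq_fderiv g (hd a) (pairLin q1) (fun x' => hq1 x') (Pi.single i 1)
  have e2 : ψc (Pi.single i 1) = fderiv ℝ g a (Pi.single i 1) :=
    subgrad_eq_fderiv g (hd a) ψc hsa (Pi.single i 1)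
  have e3 : q2 i = fderiv ℝ g b (Pi.single i 1) := by
    rw [← pairLin_single q2 i]
    exact subgrad_eq_fderiv g (hd b) (pairLin q2) (fun x' => hq2 x') (Pi.single i 1)
  have e4 : ψc (Pi.single i 1) = fderiv ℝ g b (Pi.single i 1) :=
    subgrad_eq_fderiv g (hd b) ψc hsb (Pi.single i 1)
  rw [e1, ← e2, e4, ← e3]

def mulLin (q : ℝ) : ℝ →ₗ[ℝ] ℝ := q • LinearMap.id

lemma mulLin_apply (q x : ℝ) : mulLin q x = q * x := rfl

lemma subgrad_unique_of_mid_R (g : ℝ → ℝ)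
    (hg : ConvexOn ℝ Set.univ g) (hd : Differentiable ℝ g)
    (a b q1 q2 : ℝ)
    (hmid : g a + g b = g ((a + b) / 2) + g ((a + b) / 2))
    (hq1 : ∀ x', g a + q1 * (x' - a) ≤ g x')
    (hq2 : ∀ x', g b + q2 * (x' - b) ≤ g x') : q1 = q2 := by
  set c : ℝ := (a + b) / 2 with hcdef
  have hc : a + b = c + c := by rw [hcdef]; ring
  have hc' : b + a = c + c := by rw [add_comm]; exact hc
  set ψc : ℝ →ₗ[ℝ] ℝ := (fderiv ℝ g c).toLinearMap with hψc
  have hsubc : ∀ x', g c + ψc (x' - c) ≤ g x' := fun x' => conv_grad_le g hg (hd c) x'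
  have hsa := mid_subgrad g ψc a b c hc hmid hsubc
  have hsb := mid_subgrad g ψc b a c hc' (by linarith) hsubc
  have e1 : q1 = fderiv ℝ g a 1 := by
    rw [show q1 = mulLin q1 1 by rw [mulLin_apply]; ring]
    exact subgrad_eq_fderiv g (hd a) (mulLin q1) (fun x' => hq1 x') 1
  have e2 : ψc 1 = fderiv ℝ g a 1 := subgrad_eq_fderiv g (hd a) ψc hsa 1
  have e3 : q2 = fderiv ℝ g b 1 := by
    rw [show q2 = mulLin q2 1 by rw [mulLin_apply]; ring]
    exact subgrad_eq_fderiv g (hd b) (mulLin q2) (fun x' => hq2 x') 1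
  have e4 : ψc 1 = fderiv ℝ g b 1 := subgrad_eq_fderiv g (hd b) ψc hsb 1
  rw [e1, ← e2, e4, ← e3]

end ConvAnalysis

lemma sol_bound (ℓ : LSp T n) (F : FSp T n) (φ : PhiSp T) (α : ASp T n)
    (m0 : Fin n → ℝ)
    (hconv : ConvAssumption ℓ F φ)
    (Fr : Fin (T+1) → (Fin n → ℝ) → ℝ) (hFr : ∀ s z, F s z = ↑(Fr s z))
    (fr : Fin T → ℝ → ℝ) (hfr : ∀ t z, φ t z = ↑(fr t z))
    (m : Msp T n) (π : Wsp T n) (u γ : Msp T n) (P : Psp T)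
    (h1 : IsMFGSol ℓ F φ α m0 m π u γ P) :
    ∃ Lv : Fin T → Fin n → ℝ,
      (∀ t x, ℓ t x (π t x) = ↑(Lv t x)) ∧
      (∀ t x, Lv t x = u t.castSucc x - γ t.castSucc x
          - ∑ y, π t x y * (α t x y * P t + u t.succ y)) ∧
      (∀ (mh : Msp T n) (wh : Wsp T n), (∀ x, mh 0 x = m0 x) →
        (∀ (t : Fin T) (x : Fin n), mh t.succ x = ∑ y, wh t y x) →
        (↑((∑ t, ∑ x, m t.castSucc x * Lv t x) + (∑ t, fr t (Qcpl α m π t))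
            + ∑ s, Fr s (m s)) : EReal) ≤
          (∑ t, ∑ x, persp (ℓ t x) (mh t.castSucc x) (wh t x))
            + ↑(∑ t, fr t (opA α wh t)) + ↑(∑ s, Fr s (mh s))) := by
  obtain ⟨hπΔ, hMFGi, hMFGii, hKol, hγsub, hPsub⟩ := h1
  have hℓfin : ∀ (t : Fin T) (x : Fin n),
      ℓ t x (π t x) = ↑(u t.castSucc x - γ t.castSucc x
        - ∑ y, π t x y * (α t x y * P t + u t.succ y)) := by
    intro t x
    have hb : ℓ t x (π t x) ≠ ⊥ := (hconv.1 t x).1.2 _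
    have hii := hMFGii t x
    have ht : ℓ t x (π t x) ≠ ⊤ := by
      intro hc
      rw [hc, EReal.top_add_coe, EReal.top_add_coe] at hii
      exact (EReal.coe_ne_top _) hii.symm
    have hcoe : ℓ t x (π t x) = ↑((ℓ t x (π t x)).toReal) := (EReal.coe_toReal ht hb).symm
    rw [hcoe, ← EReal.coe_add, ← EReal.coe_add] at hii
    have h3 := EReal.coe_eq_coe_iff.1 hii
    rw [hcoe]
    norm_cast
    linarith
  refine ⟨fun t x => u t.castSucc x - γ t.castSucc x
    - ∑ y, π t x y * (α t x y * P t + u t.succ y), hℓfin, fun t x => rfl, ?_⟩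
  intro mh wh h0 hk
  have hlb : ∀ (t : Fin T) (x : Fin n) (ρ : Fin n → ℝ),
      (↑((u t.castSucc x - γ t.castSucc x)
        - ∑ y, ρ y * (α t x y * P t + u t.succ y)) : EReal) ≤ ℓ t x ρ := by
    intro t x ρ
    rcases eq_or_ne (ℓ t x ρ) ⊤ with hT' | hT'
    · rw [hT']; exact le_top
    have hρΔ : ρ ∈ simplex n := (hconv.1 t x).2.2.2 ρ hT'
    have hb : ℓ t x ρ ≠ ⊥ := (hconv.1 t x).1.2 _
    have hcoe : ℓ t x ρ = ↑((ℓ t x ρ).toReal) := (EReal.coe_toReal hT' hb).symm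
    have hinf : (↑(u t.castSucc x) : EReal) ≤ ℓ t x ρ + ↑(γ t.castSucc x)
        + ↑(∑ y, ρ y * (α t x y * P t + u t.succ y)) := by
      rw [hMFGi.1 t x]
      exact iInf₂_le ρ hρΔ
    rw [hcoe] at hinf ⊢
    rw [← EReal.coe_add, ← EReal.coe_add] at hinf
    have h4 := EReal.coe_le_coe_iff.1 hinf
    exact EReal.coe_le_coe_iff.2 (by linarith)
  have hpersp : (↑(∑ t, ∑ x, (mh t.castSucc x * (u t.castSucc x - γ t.castSucc x)
      - ∑ y, wh t x y * (α t x y * P t + u t.succ y))) : EReal)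
      ≤ ∑ t, ∑ x, persp (ℓ t x) (mh t.castSucc x) (wh t x) := by
    rw [ecoe_sum]
    refine Finset.sum_le_sum fun t _ => ?_
    rw [ecoe_sum]
    exact Finset.sum_le_sum fun x _ => persp_ge (ℓ t x) _ _ (hlb t x) _ _
  have hFb : ∀ s : Fin (T+1), Fr s (m s) + ∑ i, γ s i * (mh s i - m s i) ≤ Fr s (mh s) := by
    intro s
    have h2 := (hγsub s).2 (mh s)
    rw [hFr, hFr, ← EReal.coe_add] at h2
    exact EReal.coe_le_coe_iff.1 h2
  have hφb : ∀ t : Fin T, fr t (Qcpl α m π t)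
      + P t * (opA α wh t - Qcpl α m π t) ≤ fr t (opA α wh t) := by
    intro t
    have h2 := (hPsub t).2 (opA α wh t)
    rw [hfr, hfr, ← EReal.coe_add] at h2
    exact EReal.coe_le_coe_iff.1 h2
  have htot : (↑((∑ t, ∑ x, (mh t.castSucc x * (u t.castSucc x - γ t.castSucc x)
      - ∑ y, wh t x y * (α t x y * P t + u t.succ y)))
      + (∑ t, (fr t (Qcpl α m π t) + P t * (opA α wh t - Qcpl α m π t)))
      + (∑ s, (Fr s (m s) + ∑ i, γ s i * (mh s i - m s i)))) : EReal)
      ≤ (∑ t, ∑ x, persp (ℓ t x) (mh t.castSucc x) (wh t x))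
        + ↑(∑ t, fr t (opA α wh t)) + ↑(∑ s, Fr s (mh s)) := by
    rw [EReal.coe_add, EReal.coe_add]
    refine add_le_add (add_le_add hpersp ?_) ?_
    · exact EReal.coe_le_coe_iff.2 (Finset.sum_le_sum fun t _ => hφb t)
    · exact EReal.coe_le_coe_iff.2 (Finset.sum_le_sum fun s _ => hFb s)
  refine le_trans (le_of_eq ?_) htot
  rw [EReal.coe_eq_coe_iff]
  have K1 := key_alg u γ P α m0 hMFGi.2 mh wh h0 hk
  have K2 := key_alg u γ P α m0 hMFGi.2 m (fun t x y => m t.castSucc x * π t x y)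
    hKol.1 (fun t x => by rw [hKol.2 t x])
  have hQ : ∀ t : Fin T, opA α (fun t x y => m t.castSucc x * π t x y) t
      = Qcpl α m π t := fun t => rfl
  have hpe : ∀ t : Fin T, ∑ x, (m t.castSucc x * (u t.castSucc x - γ t.castSucc x)
      - ∑ y, m t.castSucc x * π t x y * (α t x y * P t + u t.succ y))
      = ∑ x, m t.castSucc x * (u t.castSucc x - γ t.castSucc x
          - ∑ y, π t x y * (α t x y * P t + u t.succ y)) := by
    intro t
    refine Finset.sum_congr rfl fun x _ => ?_
    conv_rhs => rw [mul_sub, Finset.mul_sum]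
    congr 1
    exact Finset.sum_congr rfl fun y _ => by ring
  beta_reduce at K2
  have eQ : ∑ t : Fin T, P t * opA α (fun t x y => m t.castSucc x * π t x y) t
      = ∑ t : Fin T, P t * Qcpl α m π t :=
    Finset.sum_congr rfl fun t _ => by rw [hQ t]
  rw [Finset.sum_congr rfl fun t _ => hpe t, eQ] at K2
  have eφ : ∑ t, (fr t (Qcpl α m π t) + P t * (opA α wh t - Qcpl α m π t))
      = (∑ t, fr t (Qcpl α m π t)) + (∑ t, P t * opA α wh t)
        - ∑ t, P t * Qcpl α m π t := by
    have h5 : ∀ t ∈ (Finset.univ : Finset (Fin T)),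
        fr t (Qcpl α m π t) + P t * (opA α wh t - Qcpl α m π t)
        = fr t (Qcpl α m π t) + (P t * opA α wh t - P t * Qcpl α m π t) :=
      fun t _ => by ring
    rw [Finset.sum_congr rfl h5, Finset.sum_add_distrib, Finset.sum_sub_distrib]
    ring
  have eF : ∑ s, (Fr s (m s) + ∑ i, γ s i * (mh s i - m s i))
      = (∑ s, Fr s (m s)) + (∑ s, ∑ i, γ s i * mh s i)
        - ∑ s, ∑ i, γ s i * m s i := by
    have h5 : ∀ s ∈ (Finset.univ : Finset (Fin (T+1))),
        Fr s (m s) + ∑ i, γ s i * (mh s i - m s i)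
        = Fr s (m s) + ((∑ i, γ s i * mh s i) - ∑ i, γ s i * m s i) := by
      intro s _
      congr 1
      rw [← Finset.sum_sub_distrib]
      exact Finset.sum_congr rfl fun i _ => by ring
    rw [Finset.sum_congr rfl h5, Finset.sum_add_distrib, Finset.sum_sub_distrib]
    ring
  rw [eφ, eF]
  linarith [K1, K2]

/-- Proposition 3: uniqueness. If `F` and `φ` are differentiable
then the dual components `(u,γ,P)` of any two MFG solutions coincide; if
moreover each `ℓ(t,x,·)` is strictly convex, the MFG solution is unique. -/
theorem mfg_uniqueness {T n : ℕ} (hT : 1 ≤ T) (hn : 1 ≤ n)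
    (ℓ : LSp T n) (F : FSp T n) (φ : PhiSp T) (α : ASp T n)
    (m0 : Fin n → ℝ) (hm0 : m0 ∈ simplex n)
    (hconv : ConvAssumption ℓ F φ) (hqual : Qualif ℓ F φ α m0)
    (hFdiff : ∀ s : Fin (T + 1), ∃ Fr : (Fin n → ℝ) → ℝ,
      (∀ z, F s z = (↑(Fr z) : EReal)) ∧ Differentiable ℝ Fr)
    (hφdiff : ∀ t : Fin T, ∃ fr : ℝ → ℝ,
      (∀ z, φ t z = (↑(fr z) : EReal)) ∧ Differentiable ℝ fr)
    (m m' : Msp T n) (π π' : Wsp T n) (u u' γ γ' : Msp T n) (P P' : Psp T)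
    (h1 : IsMFGSol ℓ F φ α m0 m π u γ P)
    (h2 : IsMFGSol ℓ F φ α m0 m' π' u' γ' P') :
    (u = u' ∧ γ = γ' ∧ P = P') ∧
    ((∀ t x, EStrictConvexOn (ℓ t x)) → m = m' ∧ π = π') := by
  classical
  -- real representatives of F and φ
  have hFr : ∀ s z, F s z = ↑((hFdiff s).choose z) := fun s => (hFdiff s).choose_spec.1
  have hFd : ∀ s, Differentiable ℝ ((hFdiff s).choose) := fun s => (hFdiff s).choose_spec.2
  have hfr : ∀ t z, φ t z = ↑((hφdiff t).choose z) := fun t => (hφdiff t).choose_spec.1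
  have hfd : ∀ t, Differentiable ℝ ((hφdiff t).choose) := fun t => (hφdiff t).choose_spec.2
  set Fr : Fin (T+1) → (Fin n → ℝ) → ℝ := fun s => (hFdiff s).choose with hFrdef
  set fr : Fin T → ℝ → ℝ := fun t => (hφdiff t).choose with hfrdef
  have hFrconv : ∀ s, ConvexOn ℝ Set.univ (Fr s) := by
    intro s
    refine ⟨convex_univ, fun x _ y _ a b ha hb hab => ?_⟩
    have h5 := (hconv.2.1 s).2.1 x y a b ha hb hab
    rw [hFr, hFr, hFr, ← EReal.coe_mul, ← EReal.coe_mul, ← EReal.coe_add] at h5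
    simpa [smul_eq_mul] using EReal.coe_le_coe_iff.1 h5
  have hfrconv : ∀ t, ConvexOn ℝ Set.univ (fr t) := by
    intro t
    refine ⟨convex_univ, fun x _ y _ a b ha hb hab => ?_⟩
    have h5 := (hconv.2.2 t).2.1 x y a b ha hb hab
    rw [hfr, hfr, hfr, ← EReal.coe_mul, ← EReal.coe_mul, ← EReal.coe_add] at h5
    simpa [smul_eq_mul] using EReal.coe_le_coe_iff.1 h5
  obtain ⟨Lv1, hLv1, hLv1e, hlb1⟩ := sol_bound ℓ F φ α m0 hconv Fr hFr fr hfr m π u γ P h1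
  obtain ⟨Lv2, hLv2, hLv2e, hlb2⟩ := sol_bound ℓ F φ α m0 hconv Fr hFr fr hfr m' π' u' γ' P' h2
  obtain ⟨hπΔ1, hMFGi1, hMFGii1, hKol1, hγsub1, hPsub1⟩ := h1
  obtain ⟨hπΔ2, hMFGi2, hMFGii2, hKol2, hγsub2, hPsub2⟩ := h2
  -- nonnegativity of distributions
  have hmnn : ∀ (mm : Msp T n) (ππ : Wsp T n), InDelta ππ → IsKol m0 ππ mm →
      ∀ s x, 0 ≤ mm s x := by
    intro mm ππ hΔ hK
    have key : ∀ j : ℕ, ∀ hj : j < T + 1, ∀ x, 0 ≤ mm ⟨j, hj⟩ x := by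
      intro j
      induction j with
      | zero =>
        intro hj x
        have h0 : (⟨0, hj⟩ : Fin (T+1)) = 0 := by apply Fin.ext; simp
        rw [h0, hK.1 x]
        exact (hm0.1 x).1
      | succ k ih =>
        intro hj x
        have hk' : k < T := by omega
        have ht : (⟨k+1, hj⟩ : Fin (T+1)) = (⟨k, hk'⟩ : Fin T).succ := by
          apply Fin.ext; simp
        rw [ht, hK.2 ⟨k, hk'⟩ x]
        refine Finset.sum_nonneg fun y _ => mul_nonneg ?_ ((hΔ ⟨k, hk'⟩ y).1 x).1
        exact ih (by omega) y
    intro s x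
    have h5 := key s.1 s.isLt x
    simpa using h5
  have hmn1 : ∀ s x, 0 ≤ m s x := hmnn m π hπΔ1 hKol1
  have hmn2 : ∀ s x, 0 ≤ m' s x := hmnn m' π' hπΔ2 hKol2
  -- objective value of each solution
  have hQ1 : ∀ t : Fin T, opA α (fun t x y => m t.castSucc x * π t x y) t
      = Qcpl α m π t := fun t => rfl
  have hQ2 : ∀ t : Fin T, opA α (fun t x y => m' t.castSucc x * π' t x y) t
      = Qcpl α m' π' t := fun t => rfl
  have hpe1 : ∀ (t : Fin T) (x : Fin n),
      persp (ℓ t x) (m t.castSucc x) (fun y => m t.castSucc x * π t x y)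
        = ↑(m t.castSucc x * Lv1 t x) := by
    intro t x
    have hv : (fun y => m t.castSucc x * π t x y) = m t.castSucc x • π t x := rfl
    rw [hv]
    exact persp_eq (ℓ t x) (hLv1 t x) (hmn1 t.castSucc x)
  have hpe2 : ∀ (t : Fin T) (x : Fin n),
      persp (ℓ t x) (m' t.castSucc x) (fun y => m' t.castSucc x * π' t x y)
        = ↑(m' t.castSucc x * Lv2 t x) := by
    intro t x
    have hv : (fun y => m' t.castSucc x * π' t x y) = m' t.castSucc x • π' t x := rfl
    rw [hv]
    exact persp_eq (ℓ t x) (hLv2 t x) (hmn2 t.castSucc x)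
  have feask1 : ∀ (t : Fin T) (x : Fin n),
      m t.succ x = ∑ y, (fun t x y => m t.castSucc x * π t x y) t y x :=
    fun t x => by rw [hKol1.2 t x]
  have feask2 : ∀ (t : Fin T) (x : Fin n),
      m' t.succ x = ∑ y, (fun t x y => m' t.castSucc x * π' t x y) t y x :=
    fun t x => by rw [hKol2.2 t x]
  -- the two optimal values coincide
  have hJ2 : (∑ t, ∑ x, persp (ℓ t x) (m' t.castSucc x)
        ((fun t x y => m' t.castSucc x * π' t x y) t x))
      + (↑(∑ t, fr t (opA α (fun t x y => m' t.castSucc x * π' t x y) t)) : EReal)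
      + ↑(∑ s, Fr s (m' s))
      = ↑((∑ t, ∑ x, m' t.castSucc x * Lv2 t x) + (∑ t, fr t (Qcpl α m' π' t))
          + ∑ s, Fr s (m' s)) := by
    have e : ∑ t, ∑ x, persp (ℓ t x) (m' t.castSucc x)
        ((fun t x y => m' t.castSucc x * π' t x y) t x)
        = ((∑ t, ∑ x, m' t.castSucc x * Lv2 t x : ℝ) : EReal) := by
      rw [ecoe_sum]
      refine Finset.sum_congr rfl fun t _ => ?_
      rw [ecoe_sum]
      exact Finset.sum_congr rfl fun x _ => hpe2 t x
    rw [e, EReal.coe_add, EReal.coe_add]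
    simp only [hQ2]
  have hJ1 : (∑ t, ∑ x, persp (ℓ t x) (m t.castSucc x)
        ((fun t x y => m t.castSucc x * π t x y) t x))
      + (↑(∑ t, fr t (opA α (fun t x y => m t.castSucc x * π t x y) t)) : EReal)
      + ↑(∑ s, Fr s (m s))
      = ↑((∑ t, ∑ x, m t.castSucc x * Lv1 t x) + (∑ t, fr t (Qcpl α m π t))
          + ∑ s, Fr s (m s)) := by
    have e : ∑ t, ∑ x, persp (ℓ t x) (m t.castSucc x)
        ((fun t x y => m t.castSucc x * π t x y) t x)
        = ((∑ t, ∑ x, m t.castSucc x * Lv1 t x : ℝ) : EReal) := by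
      rw [ecoe_sum]
      refine Finset.sum_congr rfl fun t _ => ?_
      rw [ecoe_sum]
      exact Finset.sum_congr rfl fun x _ => hpe1 t x
    rw [e, EReal.coe_add, EReal.coe_add]
    simp only [hQ1]
  have hV12 : (∑ t, ∑ x, m t.castSucc x * Lv1 t x) + (∑ t, fr t (Qcpl α m π t))
      + ∑ s, Fr s (m s)
      ≤ (∑ t, ∑ x, m' t.castSucc x * Lv2 t x) + (∑ t, fr t (Qcpl α m' π' t))
      + ∑ s, Fr s (m' s) := by
    have h5 := hlb1 m' (fun t x y => m' t.castSucc x * π' t x y) hKol2.1 feask2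
    rw [hJ2] at h5
    exact EReal.coe_le_coe_iff.1 h5
  have hV21 : (∑ t, ∑ x, m' t.castSucc x * Lv2 t x) + (∑ t, fr t (Qcpl α m' π' t))
      + ∑ s, Fr s (m' s)
      ≤ (∑ t, ∑ x, m t.castSucc x * Lv1 t x) + (∑ t, fr t (Qcpl α m π t))
      + ∑ s, Fr s (m s) := by
    have h5 := hlb2 m (fun t x y => m t.castSucc x * π t x y) hKol1.1 feask1
    rw [hJ1] at h5
    exact EReal.coe_le_coe_iff.1 h5
  -- midpoint
  have feasq0 : ∀ x, (fun (s : Fin (T+1)) x => (m s x + m' s x)/2) 0 x = m0 x := by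
    intro x
    simp only
    rw [hKol1.1 x, hKol2.1 x]
    ring
  have feasqk : ∀ (t : Fin T) (x : Fin n),
      (fun (s : Fin (T+1)) x => (m s x + m' s x)/2) t.succ x
      = ∑ y, (fun (t : Fin T) x y => ((m t.castSucc x * π t x y)
          + (m' t.castSucc x * π' t x y))/2) t y x := by
    intro t x
    simp only
    rw [hKol1.2 t x, hKol2.2 t x, ← Finset.sum_add_distrib, Finset.sum_div]
  have hmidle := hlb1 (fun s x => (m s x + m' s x)/2)
    (fun t x y => ((m t.castSucc x * π t x y) + (m' t.castSucc x * π' t x y))/2)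
    feasq0 feasqk
  -- termwise bounds at the midpoint
  have hqle : ∀ (t : Fin T) (x : Fin n),
      persp (ℓ t x) ((m t.castSucc x + m' t.castSucc x)/2)
        (fun y => ((m t.castSucc x * π t x y) + (m' t.castSucc x * π' t x y))/2)
      ≤ ↑((m t.castSucc x * Lv1 t x + m' t.castSucc x * Lv2 t x)/2) := by
    intro t x
    have harg : (fun y => ((m t.castSucc x * π t x y) + (m' t.castSucc x * π' t x y))/2)
        = (2:ℝ)⁻¹ • (m t.castSucc x • π t x + m' t.castSucc x • π' t x) := by
      funext y
      simp only [Pi.smul_apply, Pi.add_apply, smul_eq_mul]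
      ring
    rw [harg]
    exact persp_mid (ℓ t x) ((hconv.1 t x).2.1) (hmn1 t.castSucc x) (hmn2 t.castSucc x)
      (hLv1 t x) (hLv2 t x)
  have hqreal : ∀ (t : Fin T) (x : Fin n), ∃ r : ℝ,
      persp (ℓ t x) ((m t.castSucc x + m' t.castSucc x)/2)
        (fun y => ((m t.castSucc x * π t x y) + (m' t.castSucc x * π' t x y))/2) = ↑r := by
    intro t x
    have hb : persp (ℓ t x) ((m t.castSucc x + m' t.castSucc x)/2)
        (fun y => ((m t.castSucc x * π t x y) + (m' t.castSucc x * π' t x y))/2) ≠ ⊥ :=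
      persp_ne_bot (ℓ t x) ((hconv.1 t x).1.2) _ _
    have ht : persp (ℓ t x) ((m t.castSucc x + m' t.castSucc x)/2)
        (fun y => ((m t.castSucc x * π t x y) + (m' t.castSucc x * π' t x y))/2) ≠ ⊤ := by
      intro hc
      have := hqle t x
      rw [hc] at this
      exact (EReal.coe_ne_top _) (top_le_iff.1 this)
    exact ⟨_, (EReal.coe_toReal ht hb).symm⟩
  choose pq hpq using hqreal
  have hperspq : ∑ t, ∑ x, persp (ℓ t x) ((m t.castSucc x + m' t.castSucc x)/2)
        (fun y => ((m t.castSucc x * π t x y) + (m' t.castSucc x * π' t x y))/2)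
      = ((∑ t, ∑ x, pq t x : ℝ) : EReal) := by
    rw [ecoe_sum]
    refine Finset.sum_congr rfl fun t _ => ?_
    rw [ecoe_sum]
    exact Finset.sum_congr rfl fun x _ => hpq t x
  rw [hperspq, ← EReal.coe_add, ← EReal.coe_add] at hmidle
  have hmidle' := EReal.coe_le_coe_iff.1 hmidle
  -- real bounds
  have hpqle : ∀ (t : Fin T) (x : Fin n),
      pq t x ≤ (m t.castSucc x * Lv1 t x + m' t.castSucc x * Lv2 t x)/2 := by
    intro t x
    have h5 := hqle t x
    rw [hpq t x] at h5
    exact EReal.coe_le_coe_iff.1 h5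
  have hopAq : ∀ t : Fin T,
      opA α (fun t x y => ((m t.castSucc x * π t x y) + (m' t.castSucc x * π' t x y))/2) t
      = (Qcpl α m π t + Qcpl α m' π' t)/2 := by
    intro t
    show ∑ x, ∑ y, ((m t.castSucc x * π t x y) + (m' t.castSucc x * π' t x y))/2 * α t x y
      = (Qcpl α m π t + Qcpl α m' π' t)/2
    rw [show Qcpl α m π t = ∑ x, ∑ y, m t.castSucc x * π t x y * α t x y from rfl,
      show Qcpl α m' π' t = ∑ x, ∑ y, m' t.castSucc x * π' t x y * α t x y from rfl,
      ← Finset.sum_add_distrib, Finset.sum_div]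
    refine Finset.sum_congr rfl fun x _ => ?_
    rw [← Finset.sum_add_distrib, Finset.sum_div]
    exact Finset.sum_congr rfl fun y _ => by ring
  have hfrq : ∀ t : Fin T,
      fr t (opA α (fun t x y => ((m t.castSucc x * π t x y)
          + (m' t.castSucc x * π' t x y))/2) t)
      ≤ (fr t (Qcpl α m π t) + fr t (Qcpl α m' π' t))/2 := by
    intro t
    rw [hopAq t, show (Qcpl α m π t + Qcpl α m' π' t)/2
      = (1/2 : ℝ) • Qcpl α m π t + (1/2 : ℝ) • Qcpl α m' π' t by simp [smul_eq_mul]; ring]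
    have h5 := (hfrconv t).2 (Set.mem_univ (Qcpl α m π t)) (Set.mem_univ (Qcpl α m' π' t))
      (by norm_num : (0:ℝ) ≤ 1/2) (by norm_num : (0:ℝ) ≤ 1/2) (by norm_num)
    simp only [smul_eq_mul] at h5 ⊢
    linarith
  have hFq : ∀ s : Fin (T+1),
      Fr s ((fun (s : Fin (T+1)) x => (m s x + m' s x)/2) s)
      ≤ (Fr s (m s) + Fr s (m' s))/2 := by
    intro s
    have harg : (fun x => (m s x + m' s x)/2) = (1/2 : ℝ) • m s + (1/2 : ℝ) • m' s := by
      funext x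
      simp only [Pi.add_apply, Pi.smul_apply, smul_eq_mul]
      ring
    show Fr s (fun x => (m s x + m' s x)/2) ≤ (Fr s (m s) + Fr s (m' s))/2
    rw [harg]
    have h5 := (hFrconv s).2 (Set.mem_univ (m s)) (Set.mem_univ (m' s))
      (by norm_num : (0:ℝ) ≤ 1/2) (by norm_num : (0:ℝ) ≤ 1/2) (by norm_num)
    simp only [smul_eq_mul] at h5 ⊢
    linarith
  -- totals
  have hA : ∑ t, ∑ x, pq t x
      ≤ ∑ t, ∑ x, (m t.castSucc x * Lv1 t x + m' t.castSucc x * Lv2 t x)/2 :=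
    Finset.sum_le_sum fun t _ => Finset.sum_le_sum fun x _ => hpqle t x
  have hB : ∑ t, fr t (opA α (fun t x y => ((m t.castSucc x * π t x y)
        + (m' t.castSucc x * π' t x y))/2) t)
      ≤ ∑ t, (fr t (Qcpl α m π t) + fr t (Qcpl α m' π' t))/2 :=
    Finset.sum_le_sum fun t _ => hfrq t
  have hC : ∑ s, Fr s ((fun (s : Fin (T+1)) x => (m s x + m' s x)/2) s)
      ≤ ∑ s, (Fr s (m s) + Fr s (m' s))/2 :=
    Finset.sum_le_sum fun s _ => hFq s
  have sum_avg : ∀ {ι : Type} (sf : Finset ι) (f g : ι → ℝ),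
      ∑ i ∈ sf, (f i + g i)/2 = ((∑ i ∈ sf, f i) + ∑ i ∈ sf, g i)/2 := by
    intro ι sf f g
    rw [← Finset.sum_add_distrib, Finset.sum_div]
  have hA' : ∑ t, ∑ x, (m t.castSucc x * Lv1 t x + m' t.castSucc x * Lv2 t x)/2
      = ((∑ t, ∑ x, m t.castSucc x * Lv1 t x) + ∑ t, ∑ x, m' t.castSucc x * Lv2 t x)/2 := by
    rw [← sum_avg]
    exact Finset.sum_congr rfl fun t _ => sum_avg _ _ _
  have hB' : ∑ t, (fr t (Qcpl α m π t) + fr t (Qcpl α m' π' t))/2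
      = ((∑ t, fr t (Qcpl α m π t)) + ∑ t, fr t (Qcpl α m' π' t))/2 := sum_avg _ _ _
  have hC' : ∑ s, (Fr s (m s) + Fr s (m' s))/2
      = ((∑ s, Fr s (m s)) + ∑ s, Fr s (m' s))/2 := sum_avg _ _ _
  -- conclude termwise equalities for F and φ
  have hBeq : ∑ t, fr t (opA α (fun t x y => ((m t.castSucc x * π t x y)
        + (m' t.castSucc x * π' t x y))/2) t)
      = ∑ t, (fr t (Qcpl α m π t) + fr t (Qcpl α m' π' t))/2 := by
    linarith [hmidle', hA, hB, hC, hV12, hV21, hA', hB', hC']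
  have hCeq : ∑ s, Fr s ((fun (s : Fin (T+1)) x => (m s x + m' s x)/2) s)
      = ∑ s, (Fr s (m s) + Fr s (m' s))/2 := by
    linarith [hmidle', hA, hB, hC, hV12, hV21, hA', hB', hC']
  have hφeq : ∀ t : Fin T, fr t ((Qcpl α m π t + Qcpl α m' π' t)/2)
      = (fr t (Qcpl α m π t) + fr t (Qcpl α m' π' t))/2 := by
    have hz : ∑ t, ((fr t (Qcpl α m π t) + fr t (Qcpl α m' π' t))/2
        - fr t (opA α (fun t x y => ((m t.castSucc x * π t x y)
            + (m' t.castSucc x * π' t x y))/2) t)) = 0 := by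
      rw [Finset.sum_sub_distrib, hBeq]; ring
    intro t
    have h5 := (Finset.sum_eq_zero_iff_of_nonneg
      (fun t _ => sub_nonneg.2 (hfrq t))).1 hz t (Finset.mem_univ t)
    have h6 := sub_eq_zero.1 h5
    rw [← hopAq t, h6]
  have hFeq : ∀ s : Fin (T+1), Fr s (fun x => (m s x + m' s x)/2)
      = (Fr s (m s) + Fr s (m' s))/2 := by
    have hz : ∑ s, ((Fr s (m s) + Fr s (m' s))/2
        - Fr s ((fun (s : Fin (T+1)) x => (m s x + m' s x)/2) s)) = 0 := by
      rw [Finset.sum_sub_distrib, hCeq]; ring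
    intro s
    have h5 := (Finset.sum_eq_zero_iff_of_nonneg
      (fun s _ => sub_nonneg.2 (hFq s))).1 hz s (Finset.mem_univ s)
    exact (sub_eq_zero.1 h5).symm
  -- γ = γ'
  have hγeq : γ = γ' := by
    funext s
    refine subgrad_unique_of_mid (Fr s) (hFrconv s) (hFd s) (m s) (m' s) (γ s) (γ' s) ?_ ?_ ?_
    · have harg : ((2:ℝ)⁻¹ • (m s + m' s)) = fun x => (m s x + m' s x)/2 := by
        funext x
        simp only [Pi.smul_apply, Pi.add_apply, smul_eq_mul]
        ring
      rw [harg, hFeq s]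
      ring
    · intro x'
      have h2 := (hγsub1 s).2 x'
      rw [hFr, hFr, ← EReal.coe_add] at h2
      exact EReal.coe_le_coe_iff.1 h2
    · intro x'
      have h2 := (hγsub2 s).2 x'
      rw [hFr, hFr, ← EReal.coe_add] at h2
      exact EReal.coe_le_coe_iff.1 h2
  -- P = P'
  have hPeq : P = P' := by
    funext t
    refine subgrad_unique_of_mid_R (fr t) (hfrconv t) (hfd t) (Qcpl α m π t)
      (Qcpl α m' π' t) (P t) (P' t) ?_ ?_ ?_
    · rw [hφeq t]; ring
    · intro x'
      have h2 := (hPsub1 t).2 x'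
      rw [hfr, hfr, ← EReal.coe_add] at h2
      exact EReal.coe_le_coe_iff.1 h2
    · intro x'
      have h2 := (hPsub2 t).2 x'
      rw [hfr, hfr, ← EReal.coe_add] at h2
      exact EReal.coe_le_coe_iff.1 h2
  -- u = u'
  have hueq : u = u' := by
    have key : ∀ j : ℕ, j ≤ T → ∀ x,
        u ⟨T - j, Nat.lt_succ_of_le (Nat.sub_le T j)⟩ x
        = u' ⟨T - j, Nat.lt_succ_of_le (Nat.sub_le T j)⟩ x := by
      intro j
      induction j with
      | zero =>
        intro hj x
        have hl : (⟨T - 0, Nat.lt_succ_of_le (Nat.sub_le T 0)⟩ : Fin (T+1)) = Fin.last T := by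
          apply Fin.ext; simp
        rw [hl, hMFGi1.2 x, hMFGi2.2 x, hγeq]
      | succ k ih =>
        intro hj x
        have hlt : T - (k+1) < T := by omega
        have hcs : (⟨T - (k+1), Nat.lt_succ_of_le (Nat.sub_le T (k+1))⟩ : Fin (T+1))
            = (⟨T - (k+1), hlt⟩ : Fin T).castSucc := by apply Fin.ext; simp
        have hsucc : (⟨T - (k+1), hlt⟩ : Fin T).succ
            = (⟨T - k, Nat.lt_succ_of_le (Nat.sub_le T k)⟩ : Fin (T+1)) := by
          apply Fin.ext; simp [Fin.succ]; omega
        have husucc : u (⟨T - (k+1), hlt⟩ : Fin T).succ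
            = u' (⟨T - (k+1), hlt⟩ : Fin T).succ := by
          funext y
          rw [hsucc]
          exact ih (by omega) y
        have e1 := hMFGi1.1 ⟨T - (k+1), hlt⟩ x
        have e2 := hMFGi2.1 ⟨T - (k+1), hlt⟩ x
        rw [hγeq, hPeq, husucc] at e1
        rw [hcs]
        exact EReal.coe_eq_coe_iff.1 (e1.trans e2.symm)
    funext s x
    have hs : s = ⟨T - (T - s.1), Nat.lt_succ_of_le (Nat.sub_le T (T - s.1))⟩ := by
      apply Fin.ext
      simp only
      omega
    rw [hs]
    exact key (T - s.1) (by omega) x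
  refine ⟨⟨hueq, hγeq, hPeq⟩, fun hsc => ?_⟩
  -- π = π' under strict convexity
  have hπeq : π = π' := by
    funext t x
    by_contra hne
    have hfin1 : ℓ t x (π t x) ≠ ⊤ := by rw [hLv1 t x]; exact EReal.coe_ne_top _
    have hfin2 : ℓ t x (π' t x) ≠ ⊤ := by rw [hLv2 t x]; exact EReal.coe_ne_top _
    have hsc' := hsc t x (π t x) (π' t x) hne hfin1 hfin2 (1/2) (1/2)
      one_half_pos one_half_pos (by norm_num)
    rw [hLv1 t x, hLv2 t x, ← EReal.coe_mul, ← EReal.coe_mul, ← EReal.coe_add] at hsc'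
    -- the midpoint policy
    set ρq : Fin n → ℝ := (1/2 : ℝ) • π t x + (1/2 : ℝ) • π' t x with hρq
    have hρqy : ∀ y, ρq y = (π t x y + π' t x y)/2 := by
      intro y
      rw [hρq]
      simp only [Pi.add_apply, Pi.smul_apply, smul_eq_mul]
      ring
    have hρΔ : ρq ∈ simplex n := by
      constructor
      · intro y
        have g1 := (hπΔ1 t x).1 y
        have g2 := (hπΔ2 t x).1 y
        rw [hρqy y]
        constructor
        · have := g1.1; have := g2.1; linarith
        · have := g1.2; have := g2.2; linarith
      · rw [Finset.sum_congr rfl fun y _ => hρqy y, ← Finset.sum_div, Finset.sum_add_distrib,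
          (hπΔ1 t x).2, (hπΔ2 t x).2]
        norm_num
    have hinf : (↑(u t.castSucc x) : EReal) ≤ ℓ t x ρq + ↑(γ t.castSucc x)
        + ↑(∑ y, ρq y * (α t x y * P t + u t.succ y)) := by
      rw [hMFGi1.1 t x]
      exact iInf₂_le ρq hρΔ
    have hbot : ℓ t x ρq ≠ ⊥ := (hconv.1 t x).1.2 _
    have htop : ℓ t x ρq ≠ ⊤ := by
      intro hc
      rw [hc] at hsc'
      exact (EReal.coe_ne_top _) (top_le_iff.1 hsc'.le)
    have hcoe : ℓ t x ρq = ↑((ℓ t x ρq).toReal) := (EReal.coe_toReal htop hbot).symm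
    rw [hcoe] at hinf hsc'
    rw [← EReal.coe_add, ← EReal.coe_add] at hinf
    have hinfR := EReal.coe_le_coe_iff.1 hinf
    have hscR := EReal.coe_lt_coe_iff.1 hsc'
    -- value identities
    have hL1e := hLv1e t x
    have hL2e := hLv2e t x
    rw [← hueq, ← hγeq, ← hPeq] at hL2e
    have hSq : ∑ y, ρq y * (α t x y * P t + u t.succ y)
        = ((∑ y, π t x y * (α t x y * P t + u t.succ y))
          + ∑ y, π' t x y * (α t x y * P t + u t.succ y))/2 := by
      rw [← Finset.sum_add_distrib, Finset.sum_div]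
      refine Finset.sum_congr rfl fun y _ => ?_
      rw [hρqy y]
      ring
    rw [hSq] at hinfR
    rw [hL1e, hL2e] at hscR
    linarith
  -- m = m'
  have hmeq : m = m' := by
    have key : ∀ j : ℕ, ∀ hj : j < T + 1, ∀ x, m ⟨j, hj⟩ x = m' ⟨j, hj⟩ x := by
      intro j
      induction j with
      | zero =>
        intro hj x
        have h0 : (⟨0, hj⟩ : Fin (T+1)) = 0 := by apply Fin.ext; simp
        rw [h0, hKol1.1 x, hKol2.1 x]
      | succ k ih =>
        intro hj x
        have hk' : k < T := by omega
        have ht : (⟨k+1, hj⟩ : Fin (T+1)) = (⟨k, hk'⟩ : Fin T).succ := by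
          apply Fin.ext; simp
        rw [ht, hKol1.2 ⟨k, hk'⟩ x, hKol2.2 ⟨k, hk'⟩ x, hπeq]
        refine Finset.sum_congr rfl fun y _ => ?_
        have hcast : ((⟨k, hk'⟩ : Fin T).castSucc) = (⟨k, Nat.lt_succ_of_lt hk'⟩ : Fin (T+1)) := by
          apply Fin.ext; simp
        rw [hcast, ih (Nat.lt_succ_of_lt hk') y]
    funext s x
    have hs : s = ⟨s.1, s.isLt⟩ := by apply Fin.ext; simp
    rw [hs]
    exact key s.1 s.isLt x
  exact ⟨hmeq, hπeq⟩


end
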